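/- Let (Ω, 𝓕, P) be a probability space and N a convex set of probability measures on (Ω,𝓕), each absolutely continuous with respect to P, such that N ∩ ℙ ≠ ∅. If f is a random variable that is P-essentially bounded from below, then sup{E_Q[f] : Q ∈ N} = sup{E_Q[f] : Q ∈ N ∩ ℙ}, where for f essentially bounded from below each E_Q[f] is well defined in (−∞, +∞] and the equality holds in ℝ ∪ {+∞}. -/

import Mathlib

open MeasureTheory
open scoped ENNReal
open Filter

/-- The extended expectation `E_Q[f] ∈ [-∞, +∞]` of a real random variable, as an `EReal`;
for `f` essentially bounded from below it takes values in `(-∞, +∞]`. -/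
noncomputable def extExp {Ω : Type*} [MeasurableSpace Ω] (Q : MeasureTheory.Measure Ω)
    (f : Ω → ℝ) : EReal :=
  ((∫⁻ x, ENNReal.ofReal (f x) ∂Q : ℝ≥0∞) : EReal) -
    ((∫⁻ x, ENNReal.ofReal (-(f x)) ∂Q : ℝ≥0∞) : EReal)

lemma coe_ennreal_eq_coe_toReal {x : ℝ≥0∞} (hx : x ≠ ⊤) :
    (x : EReal) = ((x.toReal : ℝ) : EReal) := by
  conv_lhs => rw [← ENNReal.ofReal_toReal hx]
  rw [EReal.coe_ennreal_ofReal]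
  exact congrArg _ (max_eq_left ENNReal.toReal_nonneg)

lemma extExp_eq_top {Ω : Type*} [MeasurableSpace Ω] {Q : MeasureTheory.Measure Ω}
    {f : Ω → ℝ} (hA : (∫⁻ x, ENNReal.ofReal (f x) ∂Q : ℝ≥0∞) = ⊤)
    (hB : (∫⁻ x, ENNReal.ofReal (-(f x)) ∂Q : ℝ≥0∞) ≠ ⊤) :
    extExp Q f = ⊤ := by
  rw [extExp, hA, coe_ennreal_eq_coe_toReal hB, EReal.coe_ennreal_top, EReal.top_sub_coe]

/-- Remark 2 of Biagini–Frittelli, bounded-from-below case: if `N` is a convex set of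
probability measures absolutely continuous w.r.t. `P` containing at least one measure
equivalent to `P`, and `f` is a random variable `P`-essentially bounded from below, then
`sup {E_Q[f] : Q ∈ N} = sup {E_Q[f] : Q ∈ N ∩ ℙ}`, the expectations being well defined in
`(-∞, +∞]` and the equality holding in `ℝ ∪ {+∞}`. -/
theorem sup_extExp_eq_sup_over_equivalent
    {Ω : Type*} [MeasurableSpace Ω] (P : Measure Ω) [IsProbabilityMeasure P]
    (N : Set (Measure Ω))
    (hprob : ∀ Q ∈ N, IsProbabilityMeasure Q)
    (habs : ∀ Q ∈ N, Q ≪ P)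
    (hconv : ∀ Q ∈ N, ∀ R ∈ N, ∀ t : ℝ, 0 ≤ t → t ≤ 1 →
      ENNReal.ofReal t • Q + ENNReal.ofReal (1 - t) • R ∈ N)
    (hNP : ∃ Q ∈ N, P ≪ Q)
    (f : Ω → ℝ) (hfm : AEStronglyMeasurable f P)
    (hbb : ∃ c : ℝ, ∀ᵐ x ∂P, -c ≤ f x) :
    sSup ((fun Q : Measure Ω => extExp Q f) '' N) =
      sSup ((fun Q : Measure Ω => extExp Q f) '' {Q ∈ N | P ≪ Q}) := by
  classical
  obtain ⟨R, hRN, hPR⟩ := hNP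
  obtain ⟨c, hc⟩ := hbb
  set S' := (fun Q : Measure Ω => extExp Q f) '' {Q ∈ N | P ≪ Q} with hS'def
  -- the negative parts are uniformly bounded
  have hneg : ∀ Q ∈ N, (∫⁻ x, ENNReal.ofReal (-(f x)) ∂Q) ≤ ENNReal.ofReal c := by
    intro Q hQ
    haveI := hprob Q hQ
    have hc' : ∀ᵐ x ∂Q, -c ≤ f x := (habs Q hQ).ae_le hc
    calc ∫⁻ x, ENNReal.ofReal (-(f x)) ∂Q
        ≤ ∫⁻ _, ENNReal.ofReal c ∂Q :=
          lintegral_mono_ae (hc'.mono fun x hx => ENNReal.ofReal_le_ofReal (by linarith))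
      _ = ENNReal.ofReal c := by simp
  have hnegfin : ∀ Q ∈ N, (∫⁻ x, ENNReal.ofReal (-(f x)) ∂Q) ≠ ⊤ :=
    fun Q hQ => ((hneg Q hQ).trans_lt ENNReal.ofReal_lt_top).ne
  refine le_antisymm (sSup_le ?_) (sSup_le_sSup (Set.image_mono fun Q hQ => hQ.1))
  rintro x ⟨Q, hQN, rfl⟩
  -- convex combinations lie in the equivalent part
  have hmemN : ∀ t : ℝ, 0 < t → t < 1 →
      (ENNReal.ofReal t • Q + ENNReal.ofReal (1 - t) • R) ∈ {Q ∈ N | P ≪ Q} := by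
    intro t ht0 ht1
    refine ⟨hconv Q hQN R hRN t ht0.le ht1.le, ?_⟩
    intro s hs
    have hb : ENNReal.ofReal (1 - t) ≠ 0 := (ENNReal.ofReal_pos.mpr (by linarith)).ne'
    simp only [Measure.coe_add, Pi.add_apply, Measure.smul_apply, smul_eq_mul] at hs
    have hR0 : R s = 0 :=
      (mul_eq_zero.mp (add_eq_zero.mp hs).2).resolve_left hb
    exact hPR hR0
  have hmem : ∀ t : ℝ, 0 < t → t < 1 →
      extExp (ENNReal.ofReal t • Q + ENNReal.ofReal (1 - t) • R) f ∈ S' :=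
    fun t ht0 ht1 => ⟨_, hmemN t ht0 ht1, rfl⟩
  set AQ := ∫⁻ x, ENNReal.ofReal (f x) ∂Q with hAQ
  set AR := ∫⁻ x, ENNReal.ofReal (f x) ∂ R with hAR
  set BQ := ∫⁻ x, ENNReal.ofReal (-(f x)) ∂Q with hBQ
  set BR := ∫⁻ x, ENNReal.ofReal (-(f x)) ∂ R with hBR
  have hBQfin : BQ ≠ ⊤ := hnegfin Q hQN
  have hBRfin : BR ≠ ⊤ := hnegfin R hRN
  have hAf : ∀ t : ℝ,
      (∫⁻ x, ENNReal.ofReal (f x) ∂(ENNReal.ofReal t • Q + ENNReal.ofReal (1 - t) • R))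
        = ENNReal.ofReal t * AQ + ENNReal.ofReal (1 - t) * AR := by
    intro t; rw [lintegral_add_measure, lintegral_smul_measure, lintegral_smul_measure, smul_eq_mul, smul_eq_mul]
  have hBf : ∀ t : ℝ,
      (∫⁻ x, ENNReal.ofReal (-(f x)) ∂(ENNReal.ofReal t • Q + ENNReal.ofReal (1 - t) • R))
        = ENNReal.ofReal t * BQ + ENNReal.ofReal (1 - t) * BR := by
    intro t; rw [lintegral_add_measure, lintegral_smul_measure, lintegral_smul_measure, smul_eq_mul, smul_eq_mul]
  by_cases hAQtop : AQ = ⊤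
  · -- positive part of Q infinite : the combination at t = 1/2 already has value ⊤
    have h1 : extExp (ENNReal.ofReal (1/2) • Q + ENNReal.ofReal (1 - 1/2) • R) f = ⊤ := by
      apply extExp_eq_top
      · rw [hAf, hAQtop,
          ENNReal.mul_top (ENNReal.ofReal_pos.mpr (by norm_num : (0:ℝ) < 1/2)).ne']
        simp
      · exact hnegfin _ (hmemN (1/2) (by norm_num) (by norm_num)).1
    have : (⊤ : EReal) ≤ sSup S' := h1 ▸ le_sSup (hmem (1/2) (by norm_num) (by norm_num))
    exact le_top.trans this
  · by_cases hARtop : AR = ⊤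
    · have h1 : extExp (ENNReal.ofReal (1/2) • Q + ENNReal.ofReal (1 - 1/2) • R) f = ⊤ := by
        apply extExp_eq_top
        · rw [hAf, hARtop,
            ENNReal.mul_top (ENNReal.ofReal_pos.mpr (by norm_num : (0:ℝ) < 1 - 1/2)).ne']
          simp
        · exact hnegfin _ (hmemN (1/2) (by norm_num) (by norm_num)).1
      have : (⊤ : EReal) ≤ sSup S' := h1 ▸ le_sSup (hmem (1/2) (by norm_num) (by norm_num))
      exact le_top.trans this
    · -- all quantities finite: work with real numbers
      set eQ : ℝ := AQ.toReal - BQ.toReal with heQ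
      set eR : ℝ := AR.toReal - BR.toReal with heR
      have hQval : extExp Q f = (eQ : EReal) := by
        rw [extExp, ← hAQ, ← hBQ, coe_ennreal_eq_coe_toReal hAQtop,
          coe_ennreal_eq_coe_toReal hBQfin, ← EReal.coe_sub]
      have hval : ∀ t : ℝ, 0 < t → t < 1 →
          extExp (ENNReal.ofReal t • Q + ENNReal.ofReal (1 - t) • R) f
            = ((t * eQ + (1 - t) * eR : ℝ) : EReal) := by
        intro t ht0 ht1
        have ht0' : (0:ℝ) ≤ t := ht0.le
        have ht1' : (0:ℝ) ≤ 1 - t := by linarith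
        have hAfin : ENNReal.ofReal t * AQ + ENNReal.ofReal (1 - t) * AR ≠ ⊤ := by
          exact ENNReal.add_ne_top.mpr
            ⟨ENNReal.mul_ne_top ENNReal.ofReal_ne_top hAQtop,
             ENNReal.mul_ne_top ENNReal.ofReal_ne_top hARtop⟩
        have hBfin : ENNReal.ofReal t * BQ + ENNReal.ofReal (1 - t) * BR ≠ ⊤ := by
          exact ENNReal.add_ne_top.mpr
            ⟨ENNReal.mul_ne_top ENNReal.ofReal_ne_top hBQfin,
             ENNReal.mul_ne_top ENNReal.ofReal_ne_top hBRfin⟩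
        rw [extExp, hAf, hBf, coe_ennreal_eq_coe_toReal hAfin,
          coe_ennreal_eq_coe_toReal hBfin, ← EReal.coe_sub]
        congr 1
        rw [ENNReal.toReal_add (ENNReal.mul_ne_top ENNReal.ofReal_ne_top hAQtop)
            (ENNReal.mul_ne_top ENNReal.ofReal_ne_top hARtop),
          ENNReal.toReal_add (ENNReal.mul_ne_top ENNReal.ofReal_ne_top hBQfin)
            (ENNReal.mul_ne_top ENNReal.ofReal_ne_top hBRfin),
          ENNReal.toReal_mul, ENNReal.toReal_mul, ENNReal.toReal_mul, ENNReal.toReal_mul,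
          ENNReal.toReal_ofReal ht0', ENNReal.toReal_ofReal ht1']
        ring
      -- take t_n → 1 and pass to the limit
      show extExp Q f ≤ sSup S'
      rw [hQval]
      set u : ℕ → ℝ := fun n => ((n : ℝ) + 2)⁻¹ with hu
      have hu0 : ∀ n, 0 < u n := fun n => by positivity
      have hu1 : ∀ n, u n ≤ 1/2 := by
        intro n
        rw [hu]
        rw [inv_le_comm₀ (by positivity) (by norm_num)]
        simp only [one_div, inv_inv]
        have : (0:ℝ) ≤ n := Nat.cast_nonneg n
        linarith
      have hulim : Tendsto u atTop (nhds 0) := by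
        apply tendsto_inv_atTop_zero.comp
        exact tendsto_atTop_add_const_right _ 2 tendsto_natCast_atTop_atTop
      have hvlim : Tendsto (fun n => ((1 - u n) * eQ + (u n) * eR : ℝ)) atTop (nhds eQ) := by
        have h1 : Tendsto (fun n => (1 - u n) * eQ) atTop (nhds ((1 - 0) * eQ)) :=
          (tendsto_const_nhds.sub hulim).mul tendsto_const_nhds
        have h2 : Tendsto (fun n => u n * eR) atTop (nhds (0 * eR)) :=
          hulim.mul tendsto_const_nhds
        simpa using h1.add h2
      have hvlim' : Tendsto (fun n => (((1 - u n) * eQ + (u n) * eR : ℝ) : EReal)) atTop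
          (nhds (eQ : EReal)) := EReal.tendsto_coe.mpr hvlim
      refine le_of_tendsto hvlim' (Eventually.of_forall fun n => ?_)
      have h0 : 0 < 1 - u n := by have := hu1 n; linarith
      have h1 : 1 - u n < 1 := by have := hu0 n; linarith
      have := le_sSup (hmem (1 - u n) h0 h1)
      rwa [hval (1 - u n) h0 h1, show (1 - (1 - u n) : ℝ) = u n by ring] at this
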